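/- For every matrix A ∈ M_n(ℍ), all coefficients of the characteristic polynomial of its companion matrix χ_A ∈ M_{2n}(ℂ) are real; equivalently, applying entrywise complex conjugation to the coefficients of the characteristic polynomial of χ_A leaves it unchanged, so the complex eigenvalues of χ_A occur in conjugate pairs. -/
import Mathlib


open Matrix Polynomial

/-- The first complex component of a quaternion `q = α + β j`:  `α = re + imI * i`. -/
noncomputable def qC1 (q : Quaternion ℝ) : ℂ := ⟨q.re, q.imI⟩

/-- The second complex component of a quaternion `q = α + β j`:  `β = imJ + imK * i`. -/
noncomputable def qC2 (q : Quaternion ℝ) : ℂ := ⟨q.imJ, q.imK⟩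

/-- The companion matrix `χ_A = [[A₁, A₂], [-conj A₂, conj A₁]]` of a quaternionic matrix
`A = A₁ + A₂ j`. -/
noncomputable def companion {n : ℕ} (A : Matrix (Fin n) (Fin n) (Quaternion ℝ)) :
    Matrix (Fin n ⊕ Fin n) (Fin n ⊕ Fin n) ℂ :=
  Matrix.fromBlocks (A.map qC1) (A.map qC2)
    (-(A.map fun q => (starRingEnd ℂ) (qC2 q))) (A.map fun q => (starRingEnd ℂ) (qC1 q))

/-- `lam` is a family of standard eigenvalues of the quaternionic matrix `A`: each has
nonnegative imaginary part and the characteristic polynomial of `χ_A` is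
`∏ k, (X - λ k) (X - conj (λ k))`. -/
noncomputable def IsStdEigenvalues {n : ℕ} (A : Matrix (Fin n) (Fin n) (Quaternion ℝ))
    (lam : Fin n → ℂ) : Prop :=
  (∀ k, 0 ≤ (lam k).im) ∧
    (companion A).charpoly =
      ∏ k, ((X - C (lam k)) * (X - C ((starRingEnd ℂ) (lam k))))

/-- All coefficients of the characteristic polynomial of the companion matrix `χ_A` are real;
equivalently, conjugating the coefficients leaves it unchanged, so its complex eigenvalues
occur in conjugate pairs. -/
-- auxiliary similarity lemma
lemma charpoly_eq_of_semiconj {m : Type*} [Fintype m] [DecidableEq m]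
    (M N J : Matrix m m ℂ) (hJ : J.det ≠ 0) (h : M * J = J * N) :
    M.charpoly = N.charpoly := by
  have hchar : charmatrix M * J.map C = J.map C * charmatrix N := by
    simp only [charmatrix, RingHom.mapMatrix_apply, sub_mul, mul_sub]
    congr 1
    · exact (Matrix.scalar_commute X (fun r => Commute.all _ _) (J.map C)).eq
    · rw [← Matrix.map_mul, ← Matrix.map_mul, h]
  have hdet : M.charpoly * (J.map C).det = (J.map C).det * N.charpoly := by
    rw [Matrix.charpoly, Matrix.charpoly, ← Matrix.det_mul, ← Matrix.det_mul, hchar]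
  have hJC : (J.map C).det ≠ 0 := by
    have : (J.map C).det = C J.det := by
      rw [← RingHom.mapMatrix_apply, ← RingHom.map_det]
    rw [this]
    simpa using hJ
  rw [mul_comm] at hdet
  exact mul_left_cancel₀ hJC hdet

lemma charpoly_companion_map_conj {n : ℕ}
    (A : Matrix (Fin n) (Fin n) (Quaternion ℝ)) :
    (companion A).charpoly.map (starRingEnd ℂ) = (companion A).charpoly := by
  set B := companion A with hB
  set J : Matrix (Fin n ⊕ Fin n) (Fin n ⊕ Fin n) ℂ := fromBlocks 0 (-1) 1 0 with hJdef
  have hcomm : (B.map (starRingEnd ℂ)) * J = J * B := by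
    ext i j
    rcases i with i | i <;> rcases j with j | j <;>
      simp [hB, hJdef, companion, Matrix.fromBlocks_map, Matrix.map_map,
        Matrix.fromBlocks_multiply, Function.comp]
  have hdetJ : J.det ≠ 0 := by
    have h2 : J * J = -1 := by
      ext i j
      rcases i with i | i <;> rcases j with j | j <;>
        simp [hJdef, Matrix.fromBlocks_multiply, Matrix.one_apply]
    have : J.det * J.det = (-1 : ℂ) ^ (n + n) := by
      rw [← Matrix.det_mul, h2]
      simp [Matrix.det_neg, Matrix.det_one]
    intro h
    rw [h, mul_zero] at this
    have := this.symm
    simp [Even.neg_one_pow ⟨n, rfl⟩] at this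
  rw [← Matrix.charpoly_map]
  exact charpoly_eq_of_semiconj _ _ _ hdetJ hcomm

theorem charpoly_companion_coeff_real {n : ℕ}
    (A : Matrix (Fin n) (Fin n) (Quaternion ℝ)) :
    (∀ k : ℕ, ((companion A).charpoly.coeff k).im = 0) ∧
    (companion A).charpoly.map (starRingEnd ℂ) = (companion A).charpoly ∧
    (∀ z : ℂ, (companion A).charpoly.IsRoot z ↔
      (companion A).charpoly.IsRoot ((starRingEnd ℂ) z)) := by
  have hmap := charpoly_companion_map_conj A
  have hcoeff : ∀ k : ℕ, ((companion A).charpoly.coeff k).im = 0 := by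
    intro k
    have := congrArg (fun p => p.coeff k) hmap
    simp only [Polynomial.coeff_map] at this
    have := (Complex.conj_eq_iff_im).mp this
    exact this
  refine ⟨hcoeff, hmap, fun z => ?_⟩
  have key : ∀ w : ℂ, (companion A).charpoly.eval ((starRingEnd ℂ) w)
      = (starRingEnd ℂ) ((companion A).charpoly.eval w) := by
    intro w
    conv_lhs => rw [← hmap]
    rw [Polynomial.eval_map, Polynomial.eval₂_hom]
  constructor
  · intro h
    rw [Polynomial.IsRoot, key z, h.eq_zero, map_zero]
  · intro h
    have : (starRingEnd ℂ) ((companion A).charpoly.eval z) = 0 := by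
      rw [← key z]; exact h
    simpa [Polynomial.IsRoot] using this
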